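/- arXiv:2506.16864 — 2 statements merged into one kernel-verified Lean document; each statement's English description precedes it below -/
import Mathlib

section
/- Let K₄ be the complete graph on four vertices, let B be a connected simple graph with at least three vertices, and let f : V(K₄) → V(B) be a function such that the Sierpiński product K₄ ⊗_f B is 3-connected. Then f is injective. -/
/-- The Sierpiński product of simple graphs `A` and `B` with respect to `f : V(A) → V(B)`:
vertices are pairs `(a, b)`; two vertices are adjacent iff they lie in the same fibre and
their second coordinates are adjacent in `B`, or their first coordinates are adjacent in `A`
and the second coordinates are given by `f` applied to the other first coordinate. -/
def SierpinskiProd {α β : Type*} (A : SimpleGraph α) (B : SimpleGraph β)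
    (f : α → β) : SimpleGraph (α × β) where
  Adj p q := (p.1 = q.1 ∧ B.Adj p.2 q.2) ∨
    (A.Adj p.1 q.1 ∧ p.2 = f q.1 ∧ q.2 = f p.1)
  symm := ⟨by
    rintro ⟨a₁, b₁⟩ ⟨a₂, b₂⟩ (⟨h, hB⟩ | ⟨hA, h₁, h₂⟩)
    · exact Or.inl ⟨h.symm, hB.symm⟩
    · exact Or.inr ⟨hA.symm, h₂, h₁⟩⟩
  loopless := ⟨by
    rintro ⟨a, b⟩ (⟨_, hB⟩ | ⟨hA, _, _⟩)
    · exact B.loopless.irrefl b hB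
    · exact A.loopless.irrefl a hA⟩

/-- A vertex `v` of a graph `G` is a separating vertex if deleting `v` (taking the induced
subgraph on the remaining vertices) yields a graph that is not connected. -/
def IsSeparatingVertex {V : Type*} (G : SimpleGraph V) (v : V) : Prop :=
  ¬ (G.induce ({v}ᶜ : Set V)).Connected

/-- A graph `G` is `k`-connected if it has more than `k` vertices and deleting any set of
fewer than `k` vertices leaves a connected graph. -/
def KConnected {V : Type*} [Fintype V] (k : ℕ) (G : SimpleGraph V) : Prop :=
  k < Fintype.card V ∧ ∀ S : Set V, S.ncard < k → (G.induce Sᶜ).Connected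

/-- `W` is a cut-set of `G` if deleting all vertices of `W` strictly increases the number of
connected components. -/
def IsCutSet {V : Type*} (G : SimpleGraph V) (W : Set V) : Prop :=
  Nat.card G.ConnectedComponent < Nat.card (G.induce Wᶜ).ConnectedComponent

/-- `W` is a minimal cut-set of `G` if it is a cut-set and no proper subset is a cut-set. -/
def IsMinCutSet {V : Type*} (G : SimpleGraph V) (W : Set V) : Prop :=
  IsCutSet G W ∧ ∀ W' ⊂ W, ¬ IsCutSet G W'

/-- **Proposition (part).** If `K₄ ⊗_f B` is `3`-connected, with `B` connected on at least
three vertices, then `f` is injective. -/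
theorem sierpinski_K4_injective {β : Type*} [Fintype β]
    (B : SimpleGraph β) (hB : B.Connected) (hcardB : 3 ≤ Fintype.card β)
    (f : Fin 4 → β)
    (h3 : KConnected 3 (SierpinskiProd (SimpleGraph.completeGraph (Fin 4)) B f)) :
    Function.Injective f := by
  intro a₁ a₂ hf
  by_contra ha
  set b := f a₁ with hb
  have hT : ({a₁, a₂} : Finset (Fin 4))ᶜ.card = 2 := by
    rw [Finset.card_compl, Finset.card_insert_of_notMem (by simpa using ha),
      Finset.card_singleton, Fintype.card_fin]
  obtain ⟨a₃, a₄, h34, hTeq⟩ := Finset.card_eq_two.mp hT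
  have hmem3 : a₃ ∈ ({a₁, a₂} : Finset (Fin 4))ᶜ := by rw [hTeq]; simp
  have hmem4 : a₄ ∈ ({a₁, a₂} : Finset (Fin 4))ᶜ := by rw [hTeq]; simp
  simp only [Finset.mem_compl, Finset.mem_insert, Finset.mem_singleton, not_or] at hmem3 hmem4
  have hcover : ∀ a : Fin 4, a ≠ a₁ → a ≠ a₂ → a = a₃ ∨ a = a₄ := by
    intro a h1 h2
    have : a ∈ ({a₁, a₂} : Finset (Fin 4))ᶜ := by simp [h1, h2]
    rw [hTeq] at this
    simpa using this
  set S : Set (Fin 4 × β) := {(a₃, b), (a₄, b)} with hS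
  have hSn : S.ncard < 3 := by
    rw [hS, Set.ncard_pair (by simp [h34])]
    omega
  have hconn := (h3.2 S hSn).preconnected
  obtain ⟨c, hc⟩ := Fintype.exists_ne_of_one_lt_card (by omega) b
  have hu : ((a₁, b) : Fin 4 × β) ∈ Sᶜ := by
    simp only [hS, Set.mem_compl_iff, Set.mem_insert_iff, Set.mem_singleton_iff, not_or]
    constructor
    · intro h; exact hmem3.1 (congrArg Prod.fst h).symm
    · intro h; exact hmem4.1 (congrArg Prod.fst h).symm
  have hv : ((a₃, c) : Fin 4 × β) ∈ Sᶜ := by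
    simp only [hS, Set.mem_compl_iff, Set.mem_insert_iff, Set.mem_singleton_iff, not_or]
    constructor
    · intro h; exact hc (congrArg Prod.snd h)
    · intro h; exact hc (congrArg Prod.snd h)
  obtain ⟨w⟩ := hconn ⟨(a₁, b), hu⟩ ⟨(a₃, c), hv⟩
  have key : ∀ (x y : ↥Sᶜ),
      ((SierpinskiProd (SimpleGraph.completeGraph (Fin 4)) B f).induce Sᶜ).Walk x y →
      ((x : Fin 4 × β).1 = a₁ ∨ (x : Fin 4 × β).1 = a₂) →
      ((y : Fin 4 × β).1 = a₁ ∨ (y : Fin 4 × β).1 = a₂) := by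
    intro x y w
    induction w with
    | nil => exact id
    | @cons u v z hadj p ih =>
      intro hu'
      apply ih
      have hadj' : (SierpinskiProd (SimpleGraph.completeGraph (Fin 4)) B f).Adj
          (u : Fin 4 × β) (v : Fin 4 × β) := hadj
      rcases hadj' with ⟨heq, _⟩ | ⟨_, _, h3'⟩
      · rw [← heq]; exact hu'
      · -- h3' : (↑v).2 = f (↑u).1
        have hvb : (v : Fin 4 × β).2 = b := by
          rcases hu' with h | h
          · rw [h3', h]
          · rw [h3', h, ← hf]
        by_contra hcon
        push_neg at hcon
        rcases hcover (v : Fin 4 × β).1 hcon.1 hcon.2 with h | h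
        · exact v.2 (Or.inl (Prod.ext h hvb))
        · exact v.2 (Or.inr (Prod.ext h hvb))
  rcases key _ _ w (Or.inl rfl) with h | h
  · exact hmem3.1 h
  · exact hmem3.2 h
end

section
/- Let K₄ be the complete graph on four vertices, let B be a connected simple graph with at least three vertices, and let f : V(K₄) → V(B) be a function such that the Sierpiński product K₄ ⊗_f B is 3-connected. Then B has no separating vertex, i.e. B is 2-connected. -/
lemma key_lemma {β : Type*} (B : SimpleGraph β) (f : Fin 4 → β) (b : β)
    (C : Set β) (hbC : b ∉ C) (hCne : C.Nonempty)
    (hclosed : ∀ c d, c ∈ C → d ≠ b → B.Adj c d → d ∈ C)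
    (hT : {a : Fin 4 | f a ∈ C}.ncard ≤ 2) :
    ∃ S : Set (Fin 4 × β), S.ncard < 3 ∧
      ¬ ((SierpinskiProd (SimpleGraph.completeGraph (Fin 4)) B f).induce Sᶜ).Connected := by
  classical
  set T : Set (Fin 4) := {a : Fin 4 | f a ∈ C} with hTdef
  obtain ⟨a, ha⟩ : ∃ a : Fin 4, (T \ {a}).ncard ≤ 1 := by
    by_cases h2 : T.ncard ≤ 1
    · exact ⟨0, le_trans (Set.ncard_le_ncard Set.diff_subset T.toFinite) h2⟩
    · have h2' : T.ncard = 2 := by omega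
      have hne : T.Nonempty := by
        rw [Set.nonempty_iff_ne_empty]; intro h; rw [h] at h2'; simp at h2'
      obtain ⟨a, haT⟩ := hne
      refine ⟨a, ?_⟩
      rw [Set.ncard_diff_singleton_of_mem haT, h2']
  set T' : Set (Fin 4) := T \ {a} with hT'def
  set S : Set (Fin 4 × β) := insert (a, b) ((fun a' => (a', f a)) '' T') with hSdef
  have hScard : S.ncard < 3 := by
    calc S.ncard ≤ ((fun a' => (a', f a)) '' T').ncard + 1 := Set.ncard_insert_le _ _
    _ ≤ T'.ncard + 1 := by
        have := Set.ncard_image_le (s := T') (f := fun a' => (a', f a)) T'.toFinite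
        omega
    _ < 3 := by omega
  refine ⟨S, hScard, ?_⟩
  intro hconn
  set H := (SierpinskiProd (SimpleGraph.completeGraph (Fin 4)) B f).induce Sᶜ with hHdef
  -- the invariant step
  have step : ∀ (x y : ↥Sᶜ), H.Adj x y → (x.1.1 = a ∧ x.1.2 ∈ C) →
      (y.1.1 = a ∧ y.1.2 ∈ C) := by
    rintro ⟨⟨x1, x2⟩, hx⟩ ⟨⟨y1, y2⟩, hy⟩ hadj ⟨hx1, hx2⟩
    dsimp only at hx1 hx2 ⊢
    have hadj' : (SierpinskiProd (SimpleGraph.completeGraph (Fin 4)) B f).Adj (x1, x2) (y1, y2) := hadj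
    rcases hadj' with ⟨heq, hBadj⟩ | ⟨hK, h1, h2⟩
    · simp only at heq hBadj
      refine ⟨heq ▸ hx1, ?_⟩
      have hyb : y2 ≠ b := by
        rintro rfl
        exact hy (by rw [← heq, hx1]; exact Set.mem_insert _ _)
      exact hclosed x2 y2 hx2 hyb hBadj
    · simp only at hK h1 h2
      exfalso
      have hy1a : y1 ≠ a := fun h => hK (hx1.trans h.symm)
      have hy1T : y1 ∈ T' := ⟨by rw [hTdef]; simpa [← h1], by simpa using hy1a⟩
      refine hy ((Set.mem_insert_iff).mpr (Or.inr ⟨y1, hy1T, ?_⟩))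
      rw [h2, hx1]
  have reach : ∀ (x y : ↥Sᶜ), H.Reachable x y → (x.1.1 = a ∧ x.1.2 ∈ C) →
      (y.1.1 = a ∧ y.1.2 ∈ C) := by
    intro x y hxy
    obtain ⟨w⟩ := hxy
    induction w with
    | nil => exact id
    | cons h p ih => exact fun hq => ih (step _ _ h hq)
  obtain ⟨c₀, hc₀⟩ := hCne
  have hx₀ : (a, c₀) ∈ Sᶜ := by
    intro hmem
    rcases (Set.mem_insert_iff).mp hmem with h | ⟨a', ha', heq⟩
    · exact hbC (by rwa [(Prod.mk.injEq _ _ _ _).mp h |>.2] at hc₀)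
    · exact ha'.2 ((Prod.mk.injEq _ _ _ _).mp heq |>.1)
  obtain ⟨a'', ha''⟩ : ∃ a'' : Fin 4, a'' ∉ insert a T' := by
    by_contra h
    push_neg at h
    have huniv : (insert a T' : Set (Fin 4)) = Set.univ := Set.eq_univ_of_forall h
    have : (insert a T' : Set (Fin 4)).ncard ≤ 2 := by
      have := Set.ncard_insert_le a T'
      omega
    rw [huniv, Set.ncard_univ] at this
    simp at this
  have ha''a : a'' ≠ a := fun h => ha'' (h ▸ Set.mem_insert _ _)
  have hy₀ : (a'', b) ∈ Sᶜ := by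
    intro hmem
    rcases (Set.mem_insert_iff).mp hmem with h | ⟨a', ha', heq⟩
    · exact ha''a ((Prod.mk.injEq _ _ _ _).mp h |>.1)
    · exact ha'' (Set.mem_insert_iff.mpr
        (Or.inr (((Prod.mk.injEq _ _ _ _).mp heq |>.1) ▸ ha')))
  have hr := hconn.preconnected ⟨(a, c₀), hx₀⟩ ⟨(a'', b), hy₀⟩
  exact ha''a (reach _ _ hr ⟨rfl, hc₀⟩).1

/-- **Proposition (part).** If `K₄ ⊗_f B` is `3`-connected, with `B` connected on at least
three vertices, then `B` has no separating vertex, i.e. `B` is `2`-connected. -/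
theorem sierpinski_K4_two_connected {β : Type*} [Fintype β]
    (B : SimpleGraph β) (hB : B.Connected) (hcardB : 3 ≤ Fintype.card β)
    (f : Fin 4 → β)
    (h3 : KConnected 3 (SierpinskiProd (SimpleGraph.completeGraph (Fin 4)) B f)) :
    (∀ b : β, ¬ IsSeparatingVertex B b) ∧ KConnected 2 B := by
  classical
  have hsep : ∀ b : β, ¬ IsSeparatingVertex B b := by
    intro b hb
    unfold IsSeparatingVertex at hb
    set G' := B.induce ({b}ᶜ : Set β) with hG'
    have hne : Nonempty ↥({b}ᶜ : Set β) := by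
      obtain ⟨c, hc⟩ := Fintype.exists_ne_of_one_lt_card (α := β) (by omega) b
      exact ⟨⟨c, by simpa using hc⟩⟩
    rw [SimpleGraph.connected_iff] at hb
    push_neg at hb
    have hpc : ¬ G'.Preconnected := fun h => (hb h).false hne.some
    rw [SimpleGraph.Preconnected] at hpc
    push_neg at hpc
    obtain ⟨u, v, huv⟩ := hpc
    set C : Set β := {c | ∃ hc : c ∈ ({b}ᶜ : Set β), G'.Reachable u ⟨c, hc⟩} with hC
    set D : Set β := {c | ∃ hc : c ∈ ({b}ᶜ : Set β), ¬ G'.Reachable u ⟨c, hc⟩} with hD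
    have hbC : b ∉ C := fun ⟨hc, _⟩ => hc rfl
    have hbD : b ∉ D := fun ⟨hc, _⟩ => hc rfl
    have huC : (u : β) ∈ C := ⟨u.2, by rw [Subtype.coe_eta]⟩
    have hvD : (v : β) ∈ D := ⟨v.2, by rw [Subtype.coe_eta]; exact huv⟩
    have hadjG' : ∀ (c d : β) (hc : c ∈ ({b}ᶜ : Set β)) (hd : d ∈ ({b}ᶜ : Set β)),
        B.Adj c d → G'.Adj ⟨c, hc⟩ ⟨d, hd⟩ := fun c d hc hd h => h
    have hclC : ∀ c d, c ∈ C → d ≠ b → B.Adj c d → d ∈ C := by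
      rintro c d ⟨hc, hr⟩ hdb hadj
      have hd : d ∈ ({b}ᶜ : Set β) := by simpa using hdb
      exact ⟨hd, hr.trans (hadjG' c d hc hd hadj).reachable⟩
    have hclD : ∀ c d, c ∈ D → d ≠ b → B.Adj c d → d ∈ D := by
      rintro c d ⟨hc, hnr⟩ hdb hadj
      have hd : d ∈ ({b}ᶜ : Set β) := by simpa using hdb
      exact ⟨hd, fun hr => hnr (hr.trans (hadjG' d c hd hc hadj.symm).reachable)⟩
    -- the fibre counts
    set TC : Set (Fin 4) := {a | f a ∈ C} with hTC
    set TD : Set (Fin 4) := {a | f a ∈ D} with hTD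
    have hdisj : Disjoint TC TD := by
      rw [Set.disjoint_left]
      rintro a ⟨hc, hr⟩ ⟨hc', hnr⟩
      exact hnr hr
    have hsum : TC.ncard + TD.ncard ≤ 4 := by
      rw [← Set.ncard_union_eq hdisj TC.toFinite TD.toFinite]
      have := Set.ncard_le_ncard (Set.subset_univ (TC ∪ TD)) Set.finite_univ
      rwa [Set.ncard_univ, Nat.card_eq_fintype_card, Fintype.card_fin] at this
    have hkey : ∃ S : Set (Fin 4 × β), S.ncard < 3 ∧
        ¬ ((SierpinskiProd (SimpleGraph.completeGraph (Fin 4)) B f).induce Sᶜ).Connected := by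
      by_cases hle : TC.ncard ≤ 2
      · exact key_lemma B f b C hbC ⟨u, huC⟩ hclC (by rw [← hTC]; exact hle)
      · exact key_lemma B f b D hbD ⟨v, hvD⟩ hclD (by rw [← hTD]; omega)
    obtain ⟨S, hS1, hS2⟩ := hkey
    exact hS2 (h3.2 S hS1)
  refine ⟨hsep, by omega, ?_⟩
  intro S hS
  rcases Set.eq_empty_or_nonempty S with rfl | hSne
  · rw [Set.compl_empty]
    exact (SimpleGraph.induceUnivIso B).connected_iff.mpr hB
  · have h1 : S.ncard = 1 := by
      have := (Set.ncard_pos (S.toFinite)).mpr hSne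
      omega
    obtain ⟨v, rfl⟩ := Set.ncard_eq_one.mp h1
    exact not_not.mp (hsep v)
end
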